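/- Let w and θ be continuously differentiable real-valued functions on Ω that vanish on the planes {z = 0} and {z = 1}. Then for every z ∈ [0,1], the horizontal average satisfies |⨍_{[0,l_x]×[0,l_y]} w(x,y,z) θ(x,y,z) dx dy| ≤ 4 · min(z, 1−z) · (⨍_Ω |∂_z w|²)^{1/2} · (⨍_Ω |∂_z θ|²)^{1/2}, where ⨍ denotes the average (integral divided by the measure of the integration domain). -/

import Mathlib

open MeasureTheory

/-- Cauchy–Schwarz for real integrals. -/
lemma my_cs_integral {α : Type*} [MeasurableSpace α] {μ : Measure α} {f g : α → ℝ}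
    (hf : MemLp f 2 μ) (hg : MemLp g 2 μ) :
    ∫ a, f a * g a ∂μ ≤ Real.sqrt (∫ a, f a ^ 2 ∂μ) * Real.sqrt (∫ a, g a ^ 2 ∂μ) := by
  have hconj : (2:ℝ).HolderConjugate 2 := Real.HolderConjugate.two_two
  have h2 : ENNReal.ofReal (2:ℝ) = 2 := by norm_num
  have hint : Integrable (fun a => f a * g a) μ := by
    haveI : ENNReal.HolderTriple 2 2 1 := ⟨by norm_num [ENNReal.inv_two_add_inv_two]⟩
    have := (hf.smul (r := 1) hg) -- g • f
    rw [memLp_one_iff_integrable] at this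
    exact (by simpa [smul_eq_mul, mul_comm] using this : Integrable (f * g) μ)
  have habs : Integrable (fun a => |f a| * |g a|) μ := by
    have := hint.abs
    simpa [abs_mul] using this
  have h1 : ∫ a, f a * g a ∂μ ≤ ∫ a, |f a| * |g a| ∂μ := by
    refine integral_mono hint habs fun a => ?_
    calc f a * g a ≤ |f a * g a| := le_abs_self _
    _ = |f a| * |g a| := abs_mul _ _
  have h2' : ∫ a, |f a| * |g a| ∂μ
      ≤ (∫ a, |f a| ^ (2:ℝ) ∂μ) ^ (1/(2:ℝ)) * (∫ a, |g a| ^ (2:ℝ) ∂μ) ^ (1/(2:ℝ)) := by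
    refine integral_mul_le_Lp_mul_Lq_of_nonneg hconj
      (Filter.Eventually.of_forall fun a => abs_nonneg _)
      (Filter.Eventually.of_forall fun a => abs_nonneg _) ?_ ?_
    · rw [h2]; simpa only [Real.norm_eq_abs] using hf.norm
    · rw [h2]; simpa only [Real.norm_eq_abs] using hg.norm
  have habs2 : ∀ x : ℝ, |x| ^ (2:ℝ) = x ^ 2 := fun x => by
    rw [show ((2:ℝ) = ((2:ℕ):ℝ)) by norm_num, Real.rpow_natCast, sq_abs]
  have hfe : ∫ a, |f a| ^ (2:ℝ) ∂μ = ∫ a, f a ^ 2 ∂μ := by simp only [habs2]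
  have hge : ∫ a, |g a| ^ (2:ℝ) ∂μ = ∫ a, g a ^ 2 ∂μ := by simp only [habs2]
  have hfn : 0 ≤ ∫ a, f a ^ 2 ∂μ := integral_nonneg fun a => sq_nonneg _
  have hgn : 0 ≤ ∫ a, g a ^ 2 ∂μ := integral_nonneg fun a => sq_nonneg _
  calc ∫ a, f a * g a ∂μ ≤ ∫ a, |f a| * |g a| ∂μ := h1
    _ ≤ (∫ a, |f a| ^ (2:ℝ) ∂μ) ^ (1/(2:ℝ)) * (∫ a, |g a| ^ (2:ℝ) ∂μ) ^ (1/(2:ℝ)) := h2'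
    _ = Real.sqrt (∫ a, f a ^ 2 ∂μ) * Real.sqrt (∫ a, g a ^ 2 ∂μ) := by
        rw [hfe, hge, Real.sqrt_eq_rpow, Real.sqrt_eq_rpow]

/-- Squared Cauchy–Schwarz. -/
lemma my_cs_sq {α : Type*} [MeasurableSpace α] {μ : Measure α} {f g : α → ℝ}
    (hf : MemLp f 2 μ) (hg : MemLp g 2 μ) :
    (∫ a, f a * g a ∂μ) ^ 2 ≤ (∫ a, f a ^ 2 ∂μ) * (∫ a, g a ^ 2 ∂μ) := by
  have h1 := my_cs_integral hf hg
  have hfn : 0 ≤ ∫ a, f a ^ 2 ∂μ := integral_nonneg fun a => sq_nonneg _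
  have hgn : 0 ≤ ∫ a, g a ^ 2 ∂μ := integral_nonneg fun a => sq_nonneg _
  have h2' : -(∫ a, f a * g a ∂μ) ≤ Real.sqrt (∫ a, f a ^ 2 ∂μ) * Real.sqrt (∫ a, g a ^ 2 ∂μ) := by
    have h2 := my_cs_integral hf.neg hg
    simp only [Pi.neg_apply, neg_mul, integral_neg, neg_sq] at h2
    exact h2
  have habs : |∫ a, f a * g a ∂μ| ≤ Real.sqrt (∫ a, f a ^ 2 ∂μ) * Real.sqrt (∫ a, g a ^ 2 ∂μ) :=
    abs_le.2 ⟨by linarith, h1⟩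
  calc (∫ a, f a * g a ∂μ) ^ 2 = |∫ a, f a * g a ∂μ| ^ 2 := (sq_abs _).symm
    _ ≤ (Real.sqrt (∫ a, f a ^ 2 ∂μ) * Real.sqrt (∫ a, g a ^ 2 ∂μ)) ^ 2 := by
        exact pow_le_pow_left₀ (abs_nonneg _) habs 2
    _ = (∫ a, f a ^ 2 ∂μ) * (∫ a, g a ^ 2 ∂μ) := by
        rw [mul_pow, Real.sq_sqrt hfn, Real.sq_sqrt hgn]

/-- 1D interpolation bound. -/
lemma my_key1d (W : ℝ → ℝ) (hW : ContDiff ℝ 1 W) (h0 : W 0 = 0) (h1 : W 1 = 0)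
    {z : ℝ} (hz : z ∈ Set.Icc (0:ℝ) 1) :
    W z ^ 2 ≤ min z (1 - z) * ∫ t in Set.Icc (0:ℝ) 1, (deriv W t) ^ 2 := by
  obtain ⟨hz0, hz1⟩ := hz
  obtain ⟨hd, hc⟩ := contDiff_one_iff_deriv.mp hW
  set I := ∫ t in Set.Icc (0:ℝ) 1, (deriv W t) ^ 2 with hI
  have hIint : IntegrableOn (fun t => (deriv W t) ^ 2) (Set.Icc (0:ℝ) 1) :=
    (hc.pow 2).continuousOn.integrableOn_compact isCompact_Icc
  have hIn : 0 ≤ I := setIntegral_nonneg measurableSet_Icc fun t _ => sq_nonneg _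
  -- general sub-lemma
  have key : ∀ a b : ℝ, 0 ≤ a → a ≤ b → b ≤ 1 →
      (∫ t in Set.Ioc a b, deriv W t) ^ 2 ≤ (b - a) * I := by
    intro a b ha hab hb1
    set μ := volume.restrict (Set.Ioc a b) with hμ
    have hfin : IsFiniteMeasure μ := by
      constructor
      rw [hμ, Measure.restrict_apply_univ]
      exact measure_Ioc_lt_top
    have hmemd : MemLp (deriv W) 2 μ := by
      rw [memLp_two_iff_integrable_sq hc.aestronglyMeasurable]
      exact ((hc.pow 2).continuousOn.integrableOn_compact
        (isCompact_Icc (a := a) (b := b))).mono_set Set.Ioc_subset_Icc_self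
    have hmem1 : MemLp (fun _ : ℝ => (1:ℝ)) 2 μ := memLp_const 1
    have hcs := my_cs_sq hmemd hmem1
    have e1 : ∫ t, deriv W t * 1 ∂μ = ∫ t in Set.Ioc a b, deriv W t := by simp [hμ]
    have e2 : ∫ t, (1:ℝ) ^ 2 ∂μ = b - a := by
      simp [hμ, Real.volume_Ioc, hab, ENNReal.toReal_ofReal (by linarith : (0:ℝ) ≤ b - a)]
    have e3 : ∫ t, (deriv W t) ^ 2 ∂μ ≤ I := by
      refine setIntegral_mono_set hIint
        (Filter.Eventually.of_forall fun t => sq_nonneg _) ?_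
      exact Filter.Eventually.of_forall fun t ht =>
        ⟨le_trans ha (le_of_lt ht.1), le_trans ht.2 hb1⟩
    rw [e1, e2] at hcs
    calc (∫ t in Set.Ioc a b, deriv W t) ^ 2 ≤ (∫ t, (deriv W t) ^ 2 ∂μ) * (b - a) := hcs
      _ ≤ I * (b - a) := mul_le_mul_of_nonneg_right e3 (by linarith)
      _ = (b - a) * I := mul_comm _ _
  have hii : IntervalIntegrable (deriv W) volume 0 z := hc.intervalIntegrable _ _
  have hii2 : IntervalIntegrable (deriv W) volume z 1 := hc.intervalIntegrable _ _
  have ftc1 : W z = ∫ t in Set.Ioc 0 z, deriv W t := by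
    have := intervalIntegral.integral_deriv_eq_sub (fun t _ => hd t) hii
    rw [intervalIntegral.integral_of_le hz0, h0, sub_zero] at this
    exact this.symm
  have ftc2 : W z = -∫ t in Set.Ioc z 1, deriv W t := by
    have := intervalIntegral.integral_deriv_eq_sub (fun t _ => hd t) hii2
    rw [intervalIntegral.integral_of_le hz1, h1, zero_sub] at this
    rw [this, neg_neg]
  have b1 : W z ^ 2 ≤ z * I := by
    rw [ftc1]
    simpa using key 0 z le_rfl hz0 hz1
  have b2 : W z ^ 2 ≤ (1 - z) * I := by
    rw [ftc2, neg_pow]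
    simpa using key z 1 hz0 hz1 le_rfl
  rcases le_total z (1 - z) with h | h
  · rw [min_eq_left h]; exact b1
  · rw [min_eq_right h]; exact b2

theorem stmt0 (lx ly : ℝ) (hlx : 0 < lx) (hly : 0 < ly)
    (w θ : ℝ × ℝ × ℝ → ℝ)
    (hw : ContDiff ℝ 1 w) (hθ : ContDiff ℝ 1 θ)
    (hw0 : ∀ x y : ℝ, w (x, y, 0) = 0) (hw1 : ∀ x y : ℝ, w (x, y, 1) = 0)
    (hθ0 : ∀ x y : ℝ, θ (x, y, 0) = 0) (hθ1 : ∀ x y : ℝ, θ (x, y, 1) = 0)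
    (z : ℝ) (hz : z ∈ Set.Icc (0:ℝ) 1) :
    |(lx * ly)⁻¹ * ∫ p in Set.Icc 0 lx ×ˢ Set.Icc 0 ly,
        w (p.1, p.2, z) * θ (p.1, p.2, z)|
      ≤ 4 * min z (1 - z)
        * Real.sqrt ((lx * ly)⁻¹ * ∫ p in Set.Icc 0 lx ×ˢ Set.Icc 0 ly ×ˢ Set.Icc (0:ℝ) 1,
            (deriv (fun t => w (p.1, p.2.1, t)) p.2.2) ^ 2)
        * Real.sqrt ((lx * ly)⁻¹ * ∫ p in Set.Icc 0 lx ×ˢ Set.Icc 0 ly ×ˢ Set.Icc (0:ℝ) 1,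
            (deriv (fun t => θ (p.1, p.2.1, t)) p.2.2) ^ 2) := by
  obtain ⟨hz0, hz1⟩ := hz
  have hm0 : (0:ℝ) ≤ min z (1 - z) := le_min hz0 (by linarith)
  -- directional derivative in the z direction
  have hasD : ∀ (u : ℝ × ℝ × ℝ → ℝ), ContDiff ℝ 1 u → ∀ x y t : ℝ,
      HasDerivAt (fun s => u (x, y, s)) (fderiv ℝ u (x, y, t) ((0, 0, 1) : ℝ × ℝ × ℝ)) t := by
    intro u hu x y t
    have h1 : HasDerivAt (fun s : ℝ => ((x, y, s) : ℝ × ℝ × ℝ)) ((0, 0, 1) : ℝ × ℝ × ℝ) t :=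
      (hasDerivAt_const t x).prodMk ((hasDerivAt_const t y).prodMk (hasDerivAt_id t))
    simpa [Function.comp_def] using
      ((hu.differentiable one_ne_zero (x, y, t)).hasFDerivAt.comp_hasDerivAt t h1)
  set Dw : ℝ × ℝ × ℝ → ℝ := fun q => fderiv ℝ w q ((0, 0, 1) : ℝ × ℝ × ℝ) with hDwdef
  set Dθ : ℝ × ℝ × ℝ → ℝ := fun q => fderiv ℝ θ q ((0, 0, 1) : ℝ × ℝ × ℝ) with hDθdef
  have hDwc : Continuous Dw := (hw.continuous_fderiv one_ne_zero).clm_apply continuous_const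
  have hDθc : Continuous Dθ := (hθ.continuous_fderiv one_ne_zero).clm_apply continuous_const
  -- rewrite the integrands of the triple integrals
  have hAeq : ∀ p : ℝ × ℝ × ℝ, deriv (fun t => w (p.1, p.2.1, t)) p.2.2 = Dw p := by
    intro p
    simpa using (hasD w hw p.1 p.2.1 p.2.2).deriv
  have hBeq : ∀ p : ℝ × ℝ × ℝ, deriv (fun t => θ (p.1, p.2.1, t)) p.2.2 = Dθ p := by
    intro p
    simpa using (hasD θ hθ p.1 p.2.1 p.2.2).deriv
  simp only [hAeq, hBeq]
  set s1 := Set.Icc (0:ℝ) lx with hs1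
  set s2 := Set.Icc (0:ℝ) ly with hs2
  set s3 := Set.Icc (0:ℝ) 1 with hs3
  set R := s1 ×ˢ s2 with hR
  have hRcomp : IsCompact R := isCompact_Icc.prod isCompact_Icc
  have hRmeas : MeasurableSet R := measurableSet_Icc.prod measurableSet_Icc
  -- parametric continuity
  have hgc : ∀ D : ℝ × ℝ × ℝ → ℝ, Continuous D →
      Continuous fun q : ℝ × ℝ => ∫ t in s3, (D (q.1, q.2, t)) ^ 2 := by
    intro D hD
    refine continuous_parametric_integral_of_continuous ?_ isCompact_Icc
    show Continuous fun p : (ℝ × ℝ) × ℝ => (D (p.1.1, p.1.2, p.2)) ^ 2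
    exact (hD.comp (((continuous_fst.comp continuous_fst)).prodMk
      (((continuous_snd.comp continuous_fst)).prodMk continuous_snd))).pow 2
  set F : ℝ × ℝ → ℝ := fun q => ∫ t in s3, (Dw (q.1, q.2, t)) ^ 2 with hFdef
  set G : ℝ × ℝ → ℝ := fun q => ∫ t in s3, (Dθ (q.1, q.2, t)) ^ 2 with hGdef
  have hFc : Continuous F := hgc Dw hDwc
  have hGc : Continuous G := hgc Dθ hDθc
  have hF0 : ∀ q, 0 ≤ F q := fun q =>
    setIntegral_nonneg measurableSet_Icc fun t _ => sq_nonneg _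
  have hG0 : ∀ q, 0 ≤ G q := fun q =>
    setIntegral_nonneg measurableSet_Icc fun t _ => sq_nonneg _
  -- Fubini
  have fub : ∀ D : ℝ × ℝ × ℝ → ℝ, Continuous D →
      ∫ p in s1 ×ˢ s2 ×ˢ s3, (D p) ^ 2
        = ∫ q in R, ∫ t in s3, (D (q.1, q.2, t)) ^ 2 := by
    intro D hD
    have h1 : IntegrableOn (fun p : ℝ × ℝ × ℝ => (D p) ^ 2) (s1 ×ˢ s2 ×ˢ s3) volume :=
      ((hD.pow 2).continuousOn).integrableOn_compact
        (isCompact_Icc.prod (isCompact_Icc.prod isCompact_Icc))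
    have h3 : IntegrableOn (fun q : ℝ × ℝ => ∫ t in s3, (D (q.1, q.2, t)) ^ 2) R volume :=
      (hgc D hD).continuousOn.integrableOn_compact hRcomp
    calc ∫ p in s1 ×ˢ s2 ×ˢ s3, (D p) ^ 2
        = ∫ x in s1, ∫ r in s2 ×ˢ s3, (D (x, r)) ^ 2 := by
          rw [Measure.volume_eq_prod]
          refine setIntegral_prod _ ?_
          rwa [← Measure.volume_eq_prod]
      _ = ∫ x in s1, ∫ y in s2, ∫ t in s3, (D (x, y, t)) ^ 2 := by
          refine integral_congr_ae (Filter.Eventually.of_forall fun x => ?_)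
          have h2 : IntegrableOn (fun r : ℝ × ℝ => (D (x, r)) ^ 2) (s2 ×ˢ s3) volume :=
            (((hD.comp (continuous_const.prodMk continuous_id)).pow 2).continuousOn).integrableOn_compact
              (isCompact_Icc.prod isCompact_Icc)
          rw [Measure.volume_eq_prod]
          refine setIntegral_prod _ ?_
          rwa [← Measure.volume_eq_prod]
      _ = ∫ q in R, ∫ t in s3, (D (q.1, q.2, t)) ^ 2 := by
          rw [hR, Measure.volume_eq_prod]
          refine (setIntegral_prod (fun q : ℝ × ℝ => ∫ t in s3, (D (q.1, q.2, t)) ^ 2) ?_).symm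
          rwa [← Measure.volume_eq_prod]
  set A := ∫ p in s1 ×ˢ s2 ×ˢ s3, (Dw p) ^ 2 with hA
  set B := ∫ p in s1 ×ˢ s2 ×ˢ s3, (Dθ p) ^ 2 with hB
  have hAF : A = ∫ q in R, F q := fub Dw hDwc
  have hBG : B = ∫ q in R, G q := fub Dθ hDθc
  have hAn : 0 ≤ A := by
    rw [hA]
    exact setIntegral_nonneg (measurableSet_Icc.prod (measurableSet_Icc.prod measurableSet_Icc))
      fun _ _ => sq_nonneg _
  have hBn : 0 ≤ B := by
    rw [hB]
    exact setIntegral_nonneg (measurableSet_Icc.prod (measurableSet_Icc.prod measurableSet_Icc))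
      fun _ _ => sq_nonneg _
  -- pointwise bounds
  have hwpt : ∀ x y : ℝ, w (x, y, z) ^ 2 ≤ min z (1 - z) * F (x, y) := by
    intro x y
    have hWcd : ContDiff ℝ 1 (fun s => w (x, y, s)) :=
      hw.comp (contDiff_const.prodMk (contDiff_const.prodMk contDiff_id))
    have hder : ∀ t, deriv (fun s => w (x, y, s)) t = Dw (x, y, t) := fun t =>
      (hasD w hw x y t).deriv
    have := my_key1d _ hWcd (hw0 x y) (hw1 x y) ⟨hz0, hz1⟩
    simp only [hder] at this
    exact this
  have hθpt : ∀ x y : ℝ, θ (x, y, z) ^ 2 ≤ min z (1 - z) * G (x, y) := by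
    intro x y
    have hWcd : ContDiff ℝ 1 (fun s => θ (x, y, s)) :=
      hθ.comp (contDiff_const.prodMk (contDiff_const.prodMk contDiff_id))
    have hder : ∀ t, deriv (fun s => θ (x, y, s)) t = Dθ (x, y, t) := fun t =>
      (hasD θ hθ x y t).deriv
    have := my_key1d _ hWcd (hθ0 x y) (hθ1 x y) ⟨hz0, hz1⟩
    simp only [hder] at this
    exact this
  have hpt : ∀ p : ℝ × ℝ, |w (p.1, p.2, z) * θ (p.1, p.2, z)|
      ≤ min z (1 - z) * (Real.sqrt (F p) * Real.sqrt (G p)) := by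
    intro p
    have h1 : |w (p.1, p.2, z)| ≤ Real.sqrt (min z (1 - z) * F p) :=
      Real.abs_le_sqrt (hwpt p.1 p.2)
    have h2 : |θ (p.1, p.2, z)| ≤ Real.sqrt (min z (1 - z) * G p) :=
      Real.abs_le_sqrt (hθpt p.1 p.2)
    calc |w (p.1, p.2, z) * θ (p.1, p.2, z)| = |w (p.1, p.2, z)| * |θ (p.1, p.2, z)| := abs_mul _ _
      _ ≤ Real.sqrt (min z (1 - z) * F p) * Real.sqrt (min z (1 - z) * G p) :=
          mul_le_mul h1 h2 (abs_nonneg _) (Real.sqrt_nonneg _)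
      _ = min z (1 - z) * (Real.sqrt (F p) * Real.sqrt (G p)) := by
          rw [Real.sqrt_mul hm0, Real.sqrt_mul hm0,
            show Real.sqrt (min z (1-z)) * Real.sqrt (F p) *
              (Real.sqrt (min z (1-z)) * Real.sqrt (G p))
              = (Real.sqrt (min z (1-z)) * Real.sqrt (min z (1-z)))
                * (Real.sqrt (F p) * Real.sqrt (G p)) by ring,
            Real.mul_self_sqrt hm0]
  -- integrabilities on R
  have hwc := hw.continuous
  have hθc := hθ.continuous
  have hprodc : Continuous fun p : ℝ × ℝ => w (p.1, p.2, z) * θ (p.1, p.2, z) := by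
    have hmap : Continuous fun p : ℝ × ℝ => ((p.1, p.2, z) : ℝ × ℝ × ℝ) :=
      continuous_fst.prodMk (continuous_snd.prodMk continuous_const)
    exact (hwc.comp hmap).mul (hθc.comp hmap)
  have hint1 : IntegrableOn (fun p : ℝ × ℝ => |w (p.1, p.2, z) * θ (p.1, p.2, z)|) R volume :=
    hprodc.abs.continuousOn.integrableOn_compact hRcomp
  have hint2 : IntegrableOn (fun p : ℝ × ℝ => Real.sqrt (F p) * Real.sqrt (G p)) R volume :=
    ((Real.continuous_sqrt.comp hFc).mul
      (Real.continuous_sqrt.comp hGc)).continuousOn.integrableOn_compact hRcomp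
  -- MemLp for Cauchy-Schwarz on R
  have hFsc : Continuous fun p : ℝ × ℝ => Real.sqrt (F p) := Real.continuous_sqrt.comp hFc
  have hGsc : Continuous fun p : ℝ × ℝ => Real.sqrt (G p) := Real.continuous_sqrt.comp hGc
  have hmemF : MemLp (fun p : ℝ × ℝ => Real.sqrt (F p)) 2 (volume.restrict R) := by
    rw [memLp_two_iff_integrable_sq hFsc.aestronglyMeasurable]
    have he : (fun p : ℝ × ℝ => Real.sqrt (F p) ^ 2) = F := funext fun p => Real.sq_sqrt (hF0 p)
    rw [he]
    exact hFc.continuousOn.integrableOn_compact hRcomp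
  have hmemG : MemLp (fun p : ℝ × ℝ => Real.sqrt (G p)) 2 (volume.restrict R) := by
    rw [memLp_two_iff_integrable_sq hGsc.aestronglyMeasurable]
    have he : (fun p : ℝ × ℝ => Real.sqrt (G p) ^ 2) = G := funext fun p => Real.sq_sqrt (hG0 p)
    rw [he]
    exact hGc.continuousOn.integrableOn_compact hRcomp
  have hcs := my_cs_integral hmemF hmemG
  have hsqF : ∫ p, Real.sqrt (F p) ^ 2 ∂(volume.restrict R) = ∫ q in R, F q :=
    integral_congr_ae (Filter.Eventually.of_forall fun p => Real.sq_sqrt (hF0 p))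
  have hsqG : ∫ p, Real.sqrt (G p) ^ 2 ∂(volume.restrict R) = ∫ q in R, G q :=
    integral_congr_ae (Filter.Eventually.of_forall fun p => Real.sq_sqrt (hG0 p))
  rw [hsqF, hsqG, ← hAF, ← hBG] at hcs
  -- main chain
  have hchain : |∫ p in R, w (p.1, p.2, z) * θ (p.1, p.2, z)|
      ≤ min z (1 - z) * (Real.sqrt A * Real.sqrt B) := by
    calc |∫ p in R, w (p.1, p.2, z) * θ (p.1, p.2, z)|
        ≤ ∫ p in R, |w (p.1, p.2, z) * θ (p.1, p.2, z)| := by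
          simpa only [Real.norm_eq_abs] using
            norm_integral_le_integral_norm (μ := volume.restrict R)
              (fun p : ℝ × ℝ => w (p.1, p.2, z) * θ (p.1, p.2, z))
      _ ≤ ∫ p in R, min z (1 - z) * (Real.sqrt (F p) * Real.sqrt (G p)) :=
          setIntegral_mono_on hint1 (hint2.const_mul _) hRmeas fun p _ => hpt p
      _ = min z (1 - z) * ∫ p in R, Real.sqrt (F p) * Real.sqrt (G p) := by
          rw [integral_const_mul]
      _ ≤ min z (1 - z) * (Real.sqrt A * Real.sqrt B) :=
          mul_le_mul_of_nonneg_left hcs hm0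
  -- final algebra
  have hc0 : (0:ℝ) ≤ (lx * ly)⁻¹ := inv_nonneg.mpr (mul_pos hlx hly).le
  rw [abs_mul, abs_of_nonneg hc0]
  have step1 : (lx * ly)⁻¹ * |∫ p in R, w (p.1, p.2, z) * θ (p.1, p.2, z)|
      ≤ (lx * ly)⁻¹ * (min z (1 - z) * (Real.sqrt A * Real.sqrt B)) :=
    mul_le_mul_of_nonneg_left hchain hc0
  have step2 : 4 * min z (1 - z) * Real.sqrt ((lx * ly)⁻¹ * A) * Real.sqrt ((lx * ly)⁻¹ * B)
      = 4 * ((lx * ly)⁻¹ * (min z (1 - z) * (Real.sqrt A * Real.sqrt B))) := by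
    rw [Real.sqrt_mul hc0 A, Real.sqrt_mul hc0 B]
    rw [show (4:ℝ) * min z (1 - z) * (Real.sqrt (lx * ly)⁻¹ * Real.sqrt A)
        * (Real.sqrt (lx * ly)⁻¹ * Real.sqrt B)
        = 4 * ((Real.sqrt (lx * ly)⁻¹ * Real.sqrt (lx * ly)⁻¹)
          * (min z (1 - z) * (Real.sqrt A * Real.sqrt B))) by ring,
      Real.mul_self_sqrt hc0]
  calc (lx * ly)⁻¹ * |∫ p in R, w (p.1, p.2, z) * θ (p.1, p.2, z)|
      ≤ (lx * ly)⁻¹ * (min z (1 - z) * (Real.sqrt A * Real.sqrt B)) := step1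
    _ ≤ 4 * ((lx * ly)⁻¹ * (min z (1 - z) * (Real.sqrt A * Real.sqrt B))) := by
        refine le_mul_of_one_le_left ?_ (by norm_num)
        exact mul_nonneg hc0 (mul_nonneg hm0 (mul_nonneg (Real.sqrt_nonneg _) (Real.sqrt_nonneg _)))
    _ = 4 * min z (1 - z) * Real.sqrt ((lx * ly)⁻¹ * A) * Real.sqrt ((lx * ly)⁻¹ * B) := step2.symm
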